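/- Let x_1,...,x_n be real numbers with mean x̄ and λ_2 = 2(1 - cos(π/n)) the smallest nonzero eigenvalue of the path-graph Laplacian on n vertices. Then ∑_{i=1}^{n-1} (x_{i+1} - x_i)^2 ≥ λ_2 ∑_{i=1}^n (x_i - x̄)^2. -/

import Mathlib

open Finset Real

private lemma shift_sum (n : ℕ) (f : ℕ → ℝ) (h0 : f 0 = 0) (hn : f n = 0) :
    ∑ i ∈ Finset.range n, f (i + 1) = ∑ i ∈ Finset.range n, f i := by
  have h1 := Finset.sum_range_succ' f n
  have h2 := Finset.sum_range_succ f n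
  rw [h0] at h1; rw [hn] at h2; linarith

private lemma dirichlet_poincare (n : ℕ) (hn : 2 ≤ n) (y : ℕ → ℝ) (h0 : y 0 = 0)
    (hN : y n = 0) :
    ∑ i ∈ Finset.range n, (y (i + 1) - y i) ^ 2
      ≥ 2 * (1 - Real.cos (Real.pi / n)) * ∑ i ∈ Finset.range n, (y i) ^ 2 := by
  have hnpos : (0:ℝ) < n := by positivity
  set θ : ℝ := Real.pi / n with hθ
  have hθpos : 0 < θ := div_pos Real.pi_pos hnpos
  set s : ℕ → ℝ := fun i => Real.sin (i * θ) with hs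
  have s0 : s 0 = 0 := by simp [hs]
  have snn : s n = 0 := by
    have h : (n:ℝ) * θ = Real.pi := by
      rw [hθ]; field_simp
    simp [hs, h, Real.sin_pi]
  have spos : ∀ i : ℕ, 1 ≤ i → i < n → 0 < s i := by
    intro i h1 h2
    apply Real.sin_pos_of_pos_of_lt_pi
    · have : (1:ℝ) ≤ i := by exact_mod_cast h1
      nlinarith
    · have hi : (i:ℝ) < n := by exact_mod_cast h2
      have : (i:ℝ) * θ < n * θ := by nlinarith
      calc (i:ℝ) * θ < n * θ := this
        _ = Real.pi := by rw [hθ]; field_simp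
  have srec : ∀ i : ℕ, 1 ≤ i → s (i + 1) + s (i - 1) = 2 * Real.cos θ * s i := by
    intro i h1
    have hcast : ((i - 1 : ℕ) : ℝ) = (i : ℝ) - 1 := by
      rw [Nat.cast_sub h1]; simp
    simp only [hs]
    rw [hcast]
    push_cast
    rw [show ((i:ℝ) + 1) * θ = i * θ + θ by ring, show ((i:ℝ) - 1) * θ = i * θ - θ by ring,
      Real.sin_add, Real.sin_sub]
    ring
  -- key per-term inequality
  have key : ∀ i ∈ Finset.range n, 2 * (y i * y (i + 1))
      ≤ s (i + 1) / s i * (y i) ^ 2 + s i / s (i + 1) * (y (i + 1)) ^ 2 := by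
    intro i hi
    rw [Finset.mem_range] at hi
    rcases Nat.eq_zero_or_pos i with hi0 | hi1
    · subst hi0
      simp [h0, s0]
    rcases eq_or_lt_of_le (Nat.succ_le_of_lt hi) with hi2 | hi2
    · -- i + 1 = n
      have hi2' : i + 1 = n := hi2
      have hyn : y (i + 1) = 0 := by rw [hi2']; exact hN
      have hsn : s (i + 1) = 0 := by rw [hi2']; exact snn
      simp [hyn, hsn]
    · -- interior
      have h1 : 0 < s i := spos i hi1 hi
      have h2 : 0 < s (i + 1) := spos (i + 1) (by omega) hi2
      have hiden : s (i + 1) / s i * (y i) ^ 2 + s i / s (i + 1) * (y (i + 1)) ^ 2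
          - 2 * (y i * y (i + 1))
          = (s (i + 1) * y i - s i * y (i + 1)) ^ 2 / (s i * s (i + 1)) := by
        field_simp
        ring
      have hpos : 0 ≤ (s (i + 1) * y i - s i * y (i + 1)) ^ 2 / (s i * s (i + 1)) := by
        positivity
      linarith
  -- coefficient identity
  have coeff : ∀ i ∈ Finset.range n,
      s (i + 1) / s i * (y i) ^ 2 + s (i - 1) / s i * (y i) ^ 2
        = 2 * Real.cos θ * (y i) ^ 2 := by
    intro i hi
    rw [Finset.mem_range] at hi
    rcases Nat.eq_zero_or_pos i with hi0 | hi1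
    · subst hi0; simp [h0]
    · have h1 : 0 < s i := spos i hi1 hi
      have hr := srec i hi1
      field_simp
      nlinarith [hr]
  -- sums
  have hshiftsq : ∑ i ∈ Finset.range n, (y (i + 1)) ^ 2 = ∑ i ∈ Finset.range n, (y i) ^ 2 :=
    shift_sum n (fun i => (y i) ^ 2) (by simp [h0]) (by simp [hN])
  set g : ℕ → ℝ := fun j => s (j - 1) / s j * (y j) ^ 2 with hg
  have hshiftg : ∑ i ∈ Finset.range n, g (i + 1) = ∑ i ∈ Finset.range n, g i :=
    shift_sum n g (by simp [hg, h0]) (by simp [hg, hN])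
  have hcross : ∑ i ∈ Finset.range n, 2 * (y i * y (i + 1))
      ≤ ∑ i ∈ Finset.range n, (s (i + 1) / s i * (y i) ^ 2 + s i / s (i + 1) * (y (i + 1)) ^ 2) :=
    Finset.sum_le_sum key
  have hsplit : ∑ i ∈ Finset.range n,
      (s (i + 1) / s i * (y i) ^ 2 + s i / s (i + 1) * (y (i + 1)) ^ 2)
      = ∑ i ∈ Finset.range n, (s (i + 1) / s i * (y i) ^ 2) + ∑ i ∈ Finset.range n, g (i + 1) := by
    rw [← Finset.sum_add_distrib]
    apply Finset.sum_congr rfl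
    intro i _
    simp [hg]
  have hcoeffsum : ∑ i ∈ Finset.range n, (s (i + 1) / s i * (y i) ^ 2) + ∑ i ∈ Finset.range n, g i
      = 2 * Real.cos θ * ∑ i ∈ Finset.range n, (y i) ^ 2 := by
    rw [← Finset.sum_add_distrib, Finset.mul_sum]
    apply Finset.sum_congr rfl
    intro i hi
    simpa [hg] using coeff i hi
  have hexpand : ∑ i ∈ Finset.range n, (y (i + 1) - y i) ^ 2
      = ∑ i ∈ Finset.range n, (y (i + 1)) ^ 2 + ∑ i ∈ Finset.range n, (y i) ^ 2
        - ∑ i ∈ Finset.range n, 2 * (y i * y (i + 1)) := by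
    rw [← Finset.sum_add_distrib, ← Finset.sum_sub_distrib]
    apply Finset.sum_congr rfl
    intro i _
    ring
  have hfinal : ∑ i ∈ Finset.range n, 2 * (y i * y (i + 1))
      ≤ 2 * Real.cos θ * ∑ i ∈ Finset.range n, (y i) ^ 2 := by
    calc ∑ i ∈ Finset.range n, 2 * (y i * y (i + 1))
        ≤ ∑ i ∈ Finset.range n, (s (i + 1) / s i * (y i) ^ 2 + s i / s (i + 1) * (y (i + 1)) ^ 2) :=
          hcross
      _ = ∑ i ∈ Finset.range n, (s (i + 1) / s i * (y i) ^ 2) + ∑ i ∈ Finset.range n, g (i + 1) :=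
          hsplit
      _ = ∑ i ∈ Finset.range n, (s (i + 1) / s i * (y i) ^ 2) + ∑ i ∈ Finset.range n, g i := by
          rw [hshiftg]
      _ = 2 * Real.cos θ * ∑ i ∈ Finset.range n, (y i) ^ 2 := hcoeffsum
  rw [ge_iff_le, hexpand, hshiftsq]
  linarith

theorem path_laplacian_lower (n : ℕ) (hn : 2 ≤ n) (x : ℕ → ℝ)
    (xbar : ℝ) (hxbar : xbar = (∑ i ∈ Finset.range n, x i) / n) :
    ∑ i ∈ Finset.range (n - 1), (x (i + 1) - x i) ^ 2
      ≥ 2 * (1 - Real.cos (Real.pi / n)) * ∑ i ∈ Finset.range n, (x i - xbar) ^ 2 := by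
  have hnpos : (0:ℝ) < n := by positivity
  set lam : ℝ := 2 * (1 - Real.cos (Real.pi / n)) with hlam
  have hlampos : 0 < lam := by
    have h1 : Real.cos (Real.pi / n) < Real.cos 0 := by
      apply Real.cos_lt_cos_of_nonneg_of_le_pi le_rfl
      · apply div_le_self Real.pi_pos.le
        exact_mod_cast Nat.one_le_of_lt hn
      · exact div_pos Real.pi_pos hnpos
    rw [Real.cos_zero] at h1
    simp only [hlam]
    linarith
  set z : ℕ → ℝ := fun i => x i - xbar with hz
  have hzsum : ∑ i ∈ Finset.range n, z i = 0 := by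
    simp only [hz]
    rw [Finset.sum_sub_distrib, Finset.sum_const, Finset.card_range, hxbar]
    rw [nsmul_eq_mul]; field_simp; ring
  set y : ℕ → ℝ := fun i => ∑ j ∈ Finset.range i, z j with hy
  have hy0 : y 0 = 0 := by simp [hy]
  have hyn : y n = 0 := hzsum
  have hyz : ∀ i, z i = y (i + 1) - y i := by
    intro i
    simp [hy, Finset.sum_range_succ]
  set S : ℝ := ∑ i ∈ Finset.range n, (z i) ^ 2 with hS
  set Sy : ℝ := ∑ i ∈ Finset.range n, (y i) ^ 2 with hSy
  set D : ℝ := ∑ i ∈ Finset.range (n - 1), (z (i + 1) - z i) ^ 2 with hD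
  have hgoal : ∑ i ∈ Finset.range (n - 1), (x (i + 1) - x i) ^ 2 = D := by
    apply Finset.sum_congr rfl
    intro i _
    simp only [hz]
    ring
  rw [hgoal, ge_iff_le]
  -- Dirichlet inequality: S ≥ lam * Sy
  have hdir : S ≥ lam * Sy := by
    have := dirichlet_poincare n hn y hy0 hyn
    have hSeq : ∑ i ∈ Finset.range n, (y (i + 1) - y i) ^ 2 = S := by
      apply Finset.sum_congr rfl
      intro i _
      rw [← hyz i]
    rw [hSeq] at this
    exact this
  have hSnn : 0 ≤ S := by positivity
  have hSynn : 0 ≤ Sy := by positivity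
  have hDnn : 0 ≤ D := by positivity
  -- Abel summation: ∑_{i<n-1} (z(i+1)-z i) * y(i+1) = -S
  have hm : n - 1 + 1 = n := by omega
  have e1 : ∑ i ∈ Finset.range (n - 1), z (i + 1) * y (i + 1)
      = ∑ i ∈ Finset.range n, z i * y i := by
    have h := Finset.sum_range_succ' (fun i => z i * y i) (n - 1)
    rw [hm] at h
    rw [h, hy0]
    ring
  have e2 : ∑ i ∈ Finset.range (n - 1), z i * y (i + 1)
      = ∑ i ∈ Finset.range n, z i * y (i + 1) := by
    have h := Finset.sum_range_succ (fun i => z i * y (i + 1)) (n - 1)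
    rw [hm] at h
    rw [h, hyn]
    ring
  have e3 : ∑ i ∈ Finset.range n, z i * y (i + 1)
      = ∑ i ∈ Finset.range n, z i * y i + S := by
    rw [hS, ← Finset.sum_add_distrib]
    apply Finset.sum_congr rfl
    intro i _
    have : y (i + 1) = y i + z i := by rw [hyz i]; ring
    rw [this]; ring
  have habel : ∑ i ∈ Finset.range (n - 1), (z (i + 1) - z i) * y (i + 1) = -S := by
    have : ∑ i ∈ Finset.range (n - 1), (z (i + 1) - z i) * y (i + 1)
        = ∑ i ∈ Finset.range (n - 1), z (i + 1) * y (i + 1)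
          - ∑ i ∈ Finset.range (n - 1), z i * y (i + 1) := by
      rw [← Finset.sum_sub_distrib]
      apply Finset.sum_congr rfl
      intro i _
      ring
    rw [this, e1, e2, e3]
    ring
  -- Cauchy–Schwarz
  have hcs := Finset.sum_mul_sq_le_sq_mul_sq (Finset.range (n - 1))
    (fun i => z (i + 1) - z i) (fun i => y (i + 1))
  rw [habel] at hcs
  have hy2 : ∑ i ∈ Finset.range (n - 1), (y (i + 1)) ^ 2 = Sy := by
    have h := Finset.sum_range_succ' (fun i => (y i) ^ 2) (n - 1)
    rw [hm] at h
    rw [hSy, h, hy0]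
    ring
  rw [hy2] at hcs
  -- hcs : (-S)^2 ≤ D * Sy
  have hcs' : S ^ 2 ≤ D * Sy := by
    have : (-S) ^ 2 = S ^ 2 := by ring
    rw [this] at hcs
    exact hcs
  rcases eq_or_lt_of_le hSnn with hS0 | hS0
  · rw [← hS0]
    simpa using hDnn
  · -- S > 0
    nlinarith [mul_le_mul_of_nonneg_left hdir hDnn, mul_le_mul_of_nonneg_left hcs' hlampos.le]
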